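/- arXiv:1305.7255 — 2 statements merged into one kernel-verified Lean document; each statement's English description precedes it below -/
import Mathlib

section
/- Let d ≤ s be positive integers, let J be a real s×d matrix of rank d, and let G be a real symmetric positive-definite d×d matrix. Set H̃ = J G⁻¹ Jᵀ and H = (J†)ᵀ G J† with J† = (JᵀJ)⁻¹Jᵀ. Then H is the Moore–Penrose pseudoinverse of H̃: H̃ H H̃ = H̃, H H̃ H = H, (H̃ H)ᵀ = H̃ H, and (H H̃)ᵀ = H H̃. -/
open Matrix

/-- The Moore–Penrose pseudoinverse `J† = (JᵀJ)⁻¹Jᵀ` of a full-column-rank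
matrix `J`. -/
noncomputable def pinv {s d : ℕ} (J : Matrix (Fin s) (Fin d) ℝ) :
    Matrix (Fin d) (Fin s) ℝ :=
  (Jᵀ * J)⁻¹ * Jᵀ

/-- The embedding (pushforward) metric `H = (J†)ᵀ G J†`. -/
noncomputable def embMetric {s d : ℕ} (J : Matrix (Fin s) (Fin d) ℝ)
    (G : Matrix (Fin d) (Fin d) ℝ) : Matrix (Fin s) (Fin s) ℝ :=
  (pinv J)ᵀ * G * pinv J

/-- The dual embedding metric `H̃ = J G⁻¹ Jᵀ`. -/
noncomputable def dualEmbMetric {s d : ℕ} (J : Matrix (Fin s) (Fin d) ℝ)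
    (G : Matrix (Fin d) (Fin d) ℝ) : Matrix (Fin s) (Fin s) ℝ :=
  J * G⁻¹ * Jᵀ

lemma isUnit_of_rank_eq {d : ℕ} (B : Matrix (Fin d) (Fin d) ℝ) (hB : B.rank = d) :
    IsUnit B := by
  rw [← Matrix.mulVec_injective_iff_isUnit]
  have hsurj : Function.Surjective B.mulVecLin := by
    rw [← LinearMap.range_eq_top]
    apply Submodule.eq_top_of_finrank_eq
    simpa [Matrix.rank] using hB
  exact (LinearMap.injective_iff_surjective).2 hsurj

/-- `H = (J†)ᵀ G J†` is the Moore–Penrose pseudoinverse of `H̃ = J G⁻¹ Jᵀ`: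
the four Penrose conditions hold. -/
theorem embMetric_is_pseudoinverse_of_dual {d s : ℕ} (hd : 0 < d) (hds : d ≤ s)
    (J : Matrix (Fin s) (Fin d) ℝ) (hJ : J.rank = d)
    (G : Matrix (Fin d) (Fin d) ℝ) (hG : G.PosDef) :
    dualEmbMetric J G * embMetric J G * dualEmbMetric J G = dualEmbMetric J G ∧
    embMetric J G * dualEmbMetric J G * embMetric J G = embMetric J G ∧
    (dualEmbMetric J G * embMetric J G)ᵀ = dualEmbMetric J G * embMetric J G ∧
    (embMetric J G * dualEmbMetric J G)ᵀ = embMetric J G * dualEmbMetric J G := by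
  set A : Matrix (Fin d) (Fin d) ℝ := Jᵀ * J with hA
  have hAunit : IsUnit A := by
    apply isUnit_of_rank_eq
    rw [hA, Matrix.rank_transpose_mul_self, hJ]
  have hAdet : IsUnit A.det := (Matrix.isUnit_iff_isUnit_det A).mp hAunit
  have hGdet : IsUnit G.det := (Matrix.isUnit_iff_isUnit_det G).mp hG.isUnit
  have hAsym : Aᵀ = A := by rw [hA, transpose_mul, transpose_transpose]
  -- cancellation helpers
  have cA : ∀ {k : ℕ} (X : Matrix (Fin d) (Fin k) ℝ), Jᵀ * (J * X) = A * X := by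
    intro k X; rw [← Matrix.mul_assoc, hA]
  have cAinv : ∀ {k : ℕ} (X : Matrix (Fin d) (Fin k) ℝ), A * (A⁻¹ * X) = X := by
    intro k X; rw [← Matrix.mul_assoc, Matrix.mul_nonsing_inv _ hAdet, Matrix.one_mul]
  have cAinv' : ∀ {k : ℕ} (X : Matrix (Fin d) (Fin k) ℝ), A⁻¹ * (A * X) = X := by
    intro k X; rw [← Matrix.mul_assoc, Matrix.nonsing_inv_mul _ hAdet, Matrix.one_mul]
  have cGinv : ∀ {k : ℕ} (X : Matrix (Fin d) (Fin k) ℝ), G⁻¹ * (G * X) = X := by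
    intro k X; rw [← Matrix.mul_assoc, Matrix.nonsing_inv_mul _ hGdet, Matrix.one_mul]
  have cG : ∀ {k : ℕ} (X : Matrix (Fin d) (Fin k) ℝ), G * (G⁻¹ * X) = X := by
    intro k X; rw [← Matrix.mul_assoc, Matrix.mul_nonsing_inv _ hGdet, Matrix.one_mul]
  have hH : embMetric J G = J * (A⁻¹ * (G * (A⁻¹ * Jᵀ))) := by
    simp only [embMetric, pinv, transpose_mul, transpose_nonsing_inv, transpose_transpose,
      hAsym, Matrix.mul_assoc, ← hA]
  have hHt : dualEmbMetric J G = J * (G⁻¹ * Jᵀ) := by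
    simp only [dualEmbMetric, Matrix.mul_assoc]
  -- both products equal the projection P = J A⁻¹ Jᵀ
  have h1 : dualEmbMetric J G * embMetric J G = J * (A⁻¹ * Jᵀ) := by
    rw [hH, hHt]
    simp only [Matrix.mul_assoc]
    rw [cA, cAinv, cGinv]
  have h2 : embMetric J G * dualEmbMetric J G = J * (A⁻¹ * Jᵀ) := by
    rw [hH, hHt]
    simp only [Matrix.mul_assoc]
    rw [cA, cAinv', cG]
  have hPsym : (J * (A⁻¹ * Jᵀ))ᵀ = J * (A⁻¹ * Jᵀ) := by
    rw [transpose_mul, transpose_mul, transpose_transpose, transpose_nonsing_inv, hAsym,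
      Matrix.mul_assoc]
  refine ⟨?_, ?_, ?_, ?_⟩
  · rw [h1, hHt]
    simp only [Matrix.mul_assoc]
    rw [cA, cAinv']
  · rw [Matrix.mul_assoc, h1, hH]
    simp only [Matrix.mul_assoc]
    rw [cA, cAinv]
  · rw [h1, hPsym]
  · rw [h2, hPsym]
end

section
/- Let W be a real n×n matrix with nonnegative entries such that every row sum is strictly positive, let λ ∈ ℝ, c, ε > 0, and let L = (cε)⁻¹ (D̃⁻¹ W̃ − I_n) be the associated graph Laplacian, where D = diag(W𝟙), W̃ = D^{-λ} W D^{-λ}, and D̃ = diag(W̃𝟙). For any vectors f^1, …, f^s ∈ ℝ^n and any index p ∈ {1,…,n}, the s×s matrix h̃(p) with entries h̃(p)_{ij} = (1/2)[L(f^i ⊙ f^j) − f^i ⊙ (L f^j) − f^j ⊙ (L f^i)]_p is symmetric positive semidefinite. -/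
open Matrix

lemma gram_posSemidef {s n : ℕ} (g : Fin n → ℝ) (hg : ∀ k, 0 ≤ g k)
    (v : Fin s → Fin n → ℝ) :
    (Matrix.of fun i j : Fin s => ∑ k, g k * v i k * v j k).PosSemidef := by
  refine Matrix.PosSemidef.of_dotProduct_mulVec_nonneg ?_ ?_
  · ext i j
    simp only [conjTranspose_apply, Matrix.of_apply, star_trivial]
    exact Finset.sum_congr rfl fun k _ => by ring
  · intro x
    have key : dotProduct (star x) ((Matrix.of fun i j : Fin s => ∑ k, g k * v i k * v j k) *ᵥ x)
        = ∑ k, g k * ((∑ i, x i * v i k) * (∑ j, x j * v j k)) := by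
      simp only [dotProduct, mulVec, Matrix.of_apply, star_trivial]
      calc (∑ i, x i * ∑ j, (∑ k, g k * v i k * v j k) * x j)
          = ∑ i, ∑ j, ∑ k, g k * (x i * v i k) * (x j * v j k) := by
            refine Finset.sum_congr rfl fun i _ => ?_
            rw [Finset.mul_sum]
            refine Finset.sum_congr rfl fun j _ => ?_
            rw [Finset.sum_mul, Finset.mul_sum]
            exact Finset.sum_congr rfl fun k _ => by ring
        _ = ∑ i, ∑ k, ∑ j, g k * (x i * v i k) * (x j * v j k) :=
            Finset.sum_congr rfl fun i _ => Finset.sum_comm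
        _ = ∑ k, ∑ i, ∑ j, g k * (x i * v i k) * (x j * v j k) := Finset.sum_comm
        _ = ∑ k, g k * ((∑ i, x i * v i k) * (∑ j, x j * v j k)) := by
            refine Finset.sum_congr rfl fun k _ => ?_
            rw [Finset.sum_mul_sum, Finset.mul_sum]
            refine Finset.sum_congr rfl fun i _ => ?_
            rw [Finset.mul_sum]
            exact Finset.sum_congr rfl fun j _ => by ring
    rw [key]
    exact Finset.sum_nonneg fun k _ => mul_nonneg (hg k) (mul_self_nonneg _)

/-- The discrete dual embedding metric estimate computed in Step 4 of the
LearnMetric algorithm is symmetric positive semidefinite: with the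
renormalized graph Laplacian `L = (cε)⁻¹(D̃⁻¹W̃ − I)` built from a nonnegative
weight matrix `W` with positive row sums, for any embedding coordinate vectors
`f^1, …, f^s` and any point `p`, the `s×s` matrix with entries
`h̃(p)_{ij} = (1/2)[L(f^i ⊙ f^j) − f^i ⊙ (Lf^j) − f^j ⊙ (Lf^i)]_p`
is positive semidefinite. -/
theorem learnMetric_dual_estimate_posSemidef {n s : ℕ}
    (W : Matrix (Fin n) (Fin n) ℝ)
    (hW : ∀ i j, 0 ≤ W i j)
    (hrow : ∀ i, 0 < ∑ j, W i j)
    (lam : ℝ) (c ε : ℝ) (hc : 0 < c) (hε : 0 < ε)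
    (f : Fin s → (Fin n → ℝ)) (p : Fin n) :
    let D : Matrix (Fin n) (Fin n) ℝ :=
      Matrix.diagonal fun i => (∑ j, W i j) ^ (-lam)
    let Wt : Matrix (Fin n) (Fin n) ℝ := D * W * D
    let Dt : Matrix (Fin n) (Fin n) ℝ :=
      Matrix.diagonal fun i => ∑ j, Wt i j
    let L : Matrix (Fin n) (Fin n) ℝ := (c * ε)⁻¹ • (Dt⁻¹ * Wt - 1)
    (Matrix.of fun i j : Fin s =>
        (1 / 2 : ℝ) *
          ((L *ᵥ (f i * f j)) p - f i p * (L *ᵥ f j) p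
            - f j p * (L *ᵥ f i) p)).PosSemidef := by
  intro D Wt Dt L
  have hd : ∀ i, 0 < (∑ j, W i j) ^ (-lam) := fun i => Real.rpow_pos_of_pos (hrow i) _
  have hWt : ∀ i j, Wt i j = (∑ k, W i k) ^ (-lam) * W i j * (∑ k, W j k) ^ (-lam) := by
    intro i j
    simp [Wt, D, Matrix.mul_diagonal, Matrix.diagonal_mul]
  have hWtnn : ∀ i j, 0 ≤ Wt i j := fun i j => by
    rw [hWt]
    exact mul_nonneg (mul_nonneg (hd i).le (hW i j)) (hd j).le
  set r : Fin n → ℝ := fun i => ∑ j, Wt i j with hr_def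
  have hr : ∀ i, 0 < r i := by
    intro i
    obtain ⟨j0, hj0⟩ : ∃ j, 0 < W i j := by
      by_contra h
      push_neg at h
      have : ∑ j, W i j ≤ 0 := Finset.sum_nonpos fun j _ => h j
      linarith [hrow i]
    refine Finset.sum_pos' (fun j _ => hWtnn i j) ⟨j0, Finset.mem_univ j0, ?_⟩
    rw [hWt]
    exact mul_pos (mul_pos (hd i) hj0) (hd j0)
  have hDtinv : Dt⁻¹ = Matrix.diagonal fun i => (r i)⁻¹ := by
    apply Matrix.inv_eq_right_inv
    show Matrix.diagonal r * Matrix.diagonal (fun i => (r i)⁻¹) = 1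
    rw [Matrix.diagonal_mul_diagonal]
    convert Matrix.diagonal_one with i
    exact mul_inv_cancel₀ (hr i).ne'
  have hL : ∀ g : Fin n → ℝ,
      (L *ᵥ g) p = (c * ε)⁻¹ * ((∑ k, (r p)⁻¹ * Wt p k * g k) - g p) := by
    intro g
    simp only [L, hDtinv, mulVec, dotProduct, Matrix.smul_apply, Matrix.sub_apply,
      Matrix.diagonal_mul, Matrix.one_apply, smul_eq_mul, sub_mul, ite_mul, one_mul,
      zero_mul, Finset.sum_sub_distrib, Finset.sum_ite_eq, Finset.mem_univ, if_true,
      mul_sub, Finset.mul_sum, mul_ite, mul_one, mul_zero]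
    rw [sub_left_inj]
    exact Finset.sum_congr rfl fun x _ => by ring
  have hsum : ∑ k, (r p)⁻¹ * Wt p k = 1 := by
    rw [← Finset.mul_sum]
    exact inv_mul_cancel₀ (hr p).ne'
  have hkey : ∀ i j : Fin s,
      (1 / 2 : ℝ) * ((L *ᵥ (f i * f j)) p - f i p * (L *ᵥ f j) p - f j p * (L *ᵥ f i) p)
        = ∑ k, (1 / 2 : ℝ) * (c * ε)⁻¹ * ((r p)⁻¹ * Wt p k)
            * (f i k - f i p) * (f j k - f j p) := by
    intro i j
    rw [hL, hL, hL]
    simp only [Pi.mul_apply]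
    have expand : ∑ k, (1 / 2 : ℝ) * (c * ε)⁻¹ * ((r p)⁻¹ * Wt p k)
            * (f i k - f i p) * (f j k - f j p)
        = (1 / 2 : ℝ) * (c * ε)⁻¹ *
            ((∑ k, (r p)⁻¹ * Wt p k * (f i k * f j k))
              - f j p * (∑ k, (r p)⁻¹ * Wt p k * f i k)
              - f i p * (∑ k, (r p)⁻¹ * Wt p k * f j k)
              + f i p * f j p * (∑ k, (r p)⁻¹ * Wt p k)) := by
      calc ∑ k, (1 / 2 : ℝ) * (c * ε)⁻¹ * ((r p)⁻¹ * Wt p k)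
              * (f i k - f i p) * (f j k - f j p)
          = ∑ k, (((1 / 2 : ℝ) * (c * ε)⁻¹) * ((r p)⁻¹ * Wt p k * (f i k * f j k))
              - ((1 / 2 : ℝ) * (c * ε)⁻¹ * f j p) * ((r p)⁻¹ * Wt p k * f i k)
              - ((1 / 2 : ℝ) * (c * ε)⁻¹ * f i p) * ((r p)⁻¹ * Wt p k * f j k)
              + ((1 / 2 : ℝ) * (c * ε)⁻¹ * (f i p * f j p)) * ((r p)⁻¹ * Wt p k)) :=
            Finset.sum_congr rfl fun k _ => by ring
        _ = _ := by
            rw [Finset.sum_add_distrib, Finset.sum_sub_distrib, Finset.sum_sub_distrib,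
              ← Finset.mul_sum, ← Finset.mul_sum, ← Finset.mul_sum, ← Finset.mul_sum]
            ring
    rw [expand, hsum]
    ring
  have hmat : (Matrix.of fun i j : Fin s =>
        (1 / 2 : ℝ) *
          ((L *ᵥ (f i * f j)) p - f i p * (L *ᵥ f j) p
            - f j p * (L *ᵥ f i) p))
      = Matrix.of fun i j : Fin s =>
          ∑ k, ((1 / 2 : ℝ) * (c * ε)⁻¹ * ((r p)⁻¹ * Wt p k))
            * (fun i k => f i k - f i p) i k * (fun i k => f i k - f i p) j k := by
    ext i j
    simpa using hkey i j
  rw [hmat]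
  exact gram_posSemidef _
    (fun k => mul_nonneg (mul_nonneg (by norm_num) (by positivity))
      (mul_nonneg (inv_nonneg.2 (hr p).le) (hWtnn p k))) _
end
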